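/- Let φ be a subharmonic function on ℂ with Δφ a doubling measure, and let ρ(z) be the positive radius with Δφ(D(z,ρ(z))) = 1. Then there exist constants η, C > 0 and 0 < β < 1 such that C^{−1} |z|^{−η} ≤ ρ(z) ≤ C |z|^β for all |z| > 1. -/

import Mathlib

open MeasureTheory Metric Complex Filter
open scoped ENNReal

noncomputable section

/-- Pointwise Laplacian of a function on `ℂ ≃ ℝ²`. -/
def lap (f : ℂ → ℝ) (z : ℂ) : ℝ :=
  iteratedFDeriv ℝ 2 f z ![1, 1] + iteratedFDeriv ℝ 2 f z ![Complex.I, Complex.I]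

/-- `φ` is subharmonic on `ℂ`: upper semicontinuous, locally integrable, and satisfies
the sub-mean value inequality on disks. -/
def Subharmonic (φ : ℂ → ℝ) : Prop :=
  UpperSemicontinuous φ ∧ LocallyIntegrable φ volume ∧
    ∀ z : ℂ, ∀ r : ℝ, 0 < r → φ z ≤ ⨍ w in ball z r, φ w ∂volume

/-- `μ` is the distributional Laplacian of `φ`. -/
def IsLaplacianOf (μ : Measure ℂ) (φ : ℂ → ℝ) : Prop :=
  ∀ ψ : ℂ → ℝ, ContDiff ℝ (⊤ : ℕ∞) ψ → HasCompactSupport ψ →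
    ∫ z : ℂ, lap ψ z * φ z = ∫ z : ℂ, ψ z ∂μ

/-- `μ` is doubling with doubling constant (at most) `Cd`. -/
def DoublingWith (μ : Measure ℂ) (Cd : ℝ) : Prop :=
  ∀ z : ℂ, ∀ r : ℝ, 0 < r → μ (ball z (2 * r)) ≤ ENNReal.ofReal Cd * μ (ball z r)

/-- `ρ z` is the positive radius such that `μ (D(z, ρ z)) = 1`. -/
def IsRadiusFn (μ : Measure ℂ) (ρ : ℂ → ℝ) : Prop :=
  ∀ z : ℂ, 0 < ρ z ∧ μ (ball z (ρ z)) = 1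

/-- For `x ≥ 1` there is `n` with `2^n ≤ x < 2^(n+1)`. -/
lemma exists_pow2_between (x : ℝ) (hx : 1 ≤ x) :
    ∃ n : ℕ, (2:ℝ)^n ≤ x ∧ x < 2^(n+1) := by
  have hfl : 1 ≤ ⌊x⌋₊ := Nat.le_floor (by exact_mod_cast hx)
  refine ⟨Nat.log 2 ⌊x⌋₊, ?_, ?_⟩
  · calc (2:ℝ)^Nat.log 2 ⌊x⌋₊ = ((2^Nat.log 2 ⌊x⌋₊ : ℕ) : ℝ) := by push_cast; ring
      _ ≤ (⌊x⌋₊ : ℝ) := by exact_mod_cast Nat.pow_log_le_self 2 (by omega)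
      _ ≤ x := Nat.floor_le (by linarith)
  · have h1 : x < (⌊x⌋₊ : ℝ) + 1 := Nat.lt_floor_add_one x
    have h2 : ⌊x⌋₊ + 1 ≤ 2^(Nat.log 2 ⌊x⌋₊ + 1) :=
      Nat.succ_le_of_lt (Nat.lt_pow_succ_log_self (by norm_num) _)
    calc x < (⌊x⌋₊:ℝ) + 1 := h1
      _ ≤ ((2^(Nat.log 2 ⌊x⌋₊ + 1) : ℕ) : ℝ) := by exact_mod_cast h2
      _ = (2:ℝ)^(Nat.log 2 ⌊x⌋₊ + 1) := by push_cast; ring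

/-- For `x > 0` there is `q` with `x ≤ 2^q ≤ 2 * max x 1`. -/
lemma exists_pow2_ge (x : ℝ) (hx : 0 < x) :
    ∃ q : ℕ, x ≤ 2^q ∧ (2:ℝ)^q ≤ 2 * max x 1 := by
  rcases le_or_gt x 1 with h | h
  · refine ⟨0, by simpa using h, ?_⟩
    rw [max_eq_right h]; norm_num
  · obtain ⟨n, hn1, hn2⟩ := exists_pow2_between x h.le
    refine ⟨n+1, hn2.le, ?_⟩
    rw [max_eq_left h.le, pow_succ]
    nlinarith

/-- Iterated doubling. -/
lemma dbl_iter {μ : Measure ℂ} {Cd : ℝ} (hdbl : DoublingWith μ Cd)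
    (z : ℂ) (r : ℝ) (hr : 0 < r) (n : ℕ) :
    μ (ball z ((2:ℝ)^n * r)) ≤ (ENNReal.ofReal Cd)^n * μ (ball z r) := by
  induction n with
  | zero => simp
  | succ n ih =>
    have heq : (2:ℝ)^(n+1) * r = 2 * ((2:ℝ)^n * r) := by ring
    rw [heq]
    calc μ (ball z (2 * ((2:ℝ)^n * r))) ≤ ENNReal.ofReal Cd * μ (ball z ((2:ℝ)^n * r)) :=
          hdbl z _ (by positivity)
      _ ≤ ENNReal.ofReal Cd * ((ENNReal.ofReal Cd)^n * μ (ball z r)) := mul_le_mul_right ih _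
      _ = (ENNReal.ofReal Cd)^(n+1) * μ (ball z r) := by rw [pow_succ]; ring

/-- Reverse doubling single step. -/
lemma revdbl_step {μ : Measure ℂ} {Cd : ℝ} (hdbl : DoublingWith μ Cd) (hCd : 1 ≤ Cd)
    (z : ℂ) (r : ℝ) (hr : 0 < r) :
    μ (ball z r) + (ENNReal.ofReal Cd)⁻¹^3 * μ (ball z r) ≤ μ (ball z (2*r)) := by
  set K := ENNReal.ofReal Cd with hK
  have hK1 : (1:ℝ≥0∞) ≤ K := ENNReal.one_le_ofReal.mpr hCd
  have hKne0 : K ≠ 0 := by intro h; rw [h] at hK1; exact absurd hK1 (by simp)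
  have hKnetop : K ≠ ⊤ := ENNReal.ofReal_ne_top
  set w : ℂ := z + ((3*r/2 : ℝ) : ℂ) with hw
  have hdzw : dist z w = 3*r/2 := by
    rw [Complex.dist_eq]
    have hzw : z - w = -((3*r/2 : ℝ) : ℂ) := by rw [hw]; ring
    rw [hzw, norm_neg, Complex.norm_real, Real.norm_eq_abs, abs_of_pos (by linarith)]
  have hsub1 : ball z r ⊆ ball w ((2:ℝ)^3 * (r/2)) := by
    intro x hx
    rw [mem_ball] at hx ⊢
    calc dist x w ≤ dist x z + dist z w := dist_triangle _ _ _
      _ < r + 3*r/2 := by rw [hdzw]; linarith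
      _ ≤ (2:ℝ)^3 * (r/2) := by norm_num; linarith
  have h1 : μ (ball z r) ≤ K^3 * μ (ball w (r/2)) :=
    le_trans (measure_mono hsub1) (dbl_iter hdbl w (r/2) (by linarith) 3)
  have h2 : K⁻¹^3 * μ (ball z r) ≤ μ (ball w (r/2)) := by
    have hdiv : μ (ball z r) / K^3 ≤ μ (ball w (r/2)) :=
      (ENNReal.div_le_iff_le_mul (Or.inl (pow_ne_zero 3 hKne0))
        (Or.inl (ENNReal.pow_ne_top hKnetop))).mpr (by rw [mul_comm]; exact h1)
    calc K⁻¹^3 * μ (ball z r) = μ (ball z r) / K^3 := by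
          rw [← ENNReal.inv_pow, mul_comm, div_eq_mul_inv]
      _ ≤ μ (ball w (r/2)) := hdiv
  have hdisj : Disjoint (ball z r) (ball w (r/2)) :=
    ball_disjoint_ball (by rw [hdzw]; linarith)
  have hunion : ball z r ∪ ball w (r/2) ⊆ ball z (2*r) := by
    intro x hx
    rcases hx with hx | hx
    · exact mem_ball.mpr (lt_of_lt_of_le (mem_ball.mp hx) (by linarith))
    · rw [mem_ball] at hx ⊢
      calc dist x z ≤ dist x w + dist w z := dist_triangle _ _ _
        _ < r/2 + 3*r/2 := by rw [dist_comm w z, hdzw]; linarith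
        _ = 2*r := by ring
  calc μ (ball z r) + K⁻¹^3 * μ (ball z r)
      ≤ μ (ball z r) + μ (ball w (r/2)) := add_le_add_right h2 _
    _ = μ (ball z r ∪ ball w (r/2)) := (measure_union hdisj measurableSet_ball).symm
    _ ≤ μ (ball z (2*r)) := measure_mono hunion

/-- Iterated reverse doubling. -/
lemma revdbl_iter {μ : Measure ℂ} {Cd : ℝ} (hdbl : DoublingWith μ Cd) (hCd : 1 ≤ Cd)
    (z : ℂ) (r : ℝ) (hr : 0 < r) (n : ℕ) :
    (1 + (ENNReal.ofReal Cd)⁻¹^3)^n * μ (ball z r) ≤ μ (ball z ((2:ℝ)^n * r)) := by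
  induction n with
  | zero => simp
  | succ n ih =>
    have heq : (2:ℝ)^(n+1) * r = 2 * ((2:ℝ)^n * r) := by ring
    rw [heq]
    set ε := (ENNReal.ofReal Cd)⁻¹^3
    calc (1 + ε)^(n+1) * μ (ball z r) = (1 + ε) * ((1 + ε)^n * μ (ball z r)) := by
          rw [pow_succ]; ring
      _ ≤ (1 + ε) * μ (ball z ((2:ℝ)^n * r)) := mul_le_mul_right ih _
      _ = μ (ball z ((2:ℝ)^n * r)) + ε * μ (ball z ((2:ℝ)^n * r)) := by ring
      _ ≤ μ (ball z (2 * ((2:ℝ)^n * r))) := revdbl_step hdbl hCd z _ (by positivity)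

set_option maxHeartbeats 2000000

/-- MMO03, Remark 1: there are constants `η, C > 0` and `0 < β < 1`
such that `C⁻¹ |z|^{-η} ≤ ρ(z) ≤ C |z|^β` for `|z| > 1`. -/
theorem rho_polynomial_growth_bounds
    (Cd : ℝ) (φ : ℂ → ℝ) (μ : Measure ℂ) (ρ : ℂ → ℝ)
    (hsub : Subharmonic φ) (hlap : IsLaplacianOf μ φ) (hdbl : DoublingWith μ Cd)
    (hρ : IsRadiusFn μ ρ) :
    ∃ η C β : ℝ, 0 < η ∧ 0 < C ∧ 0 < β ∧ β < 1 ∧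
      ∀ z : ℂ, 1 < ‖z‖ →
        C⁻¹ * ‖z‖ ^ (-η) ≤ ρ z ∧ ρ z ≤ C * ‖z‖ ^ β := by
  clear hsub hlap
  obtain ⟨hρ0pos, hρ0⟩ := hρ 0
  set ρ0 := ρ 0 with hρ0def
  set K := ENNReal.ofReal Cd with hKdef
  -- Cd ≥ 1
  have hCd1 : 1 ≤ Cd := by
    have h1 : (1:ℝ≥0∞) ≤ μ (ball 0 (2 * ρ0)) := by
      rw [← hρ0]; exact measure_mono (ball_subset_ball (by linarith))
    have h2 : μ (ball 0 (2 * ρ0)) ≤ K := by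
      have h := hdbl 0 ρ0 hρ0pos
      rwa [hρ0, mul_one] at h
    exact ENNReal.one_le_ofReal.mp (le_trans h1 h2)
  have hCdpos : (0:ℝ) < Cd := by linarith
  set δr : ℝ := 1 + (Cd⁻¹)^3 with hδrdef
  have hδr1 : 1 < δr := by
    have h : 0 < (Cd⁻¹)^3 := by positivity
    rw [hδrdef]; linarith
  have hδE : (1 + K⁻¹^3 : ℝ≥0∞) = ENNReal.ofReal δr := by
    rw [hδrdef, ENNReal.ofReal_add zero_le_one (by positivity), ENNReal.ofReal_one,
      ENNReal.ofReal_pow (by positivity), ENNReal.ofReal_inv_of_pos hCdpos, hKdef]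
  -- δr ≤ Cd
  have hδrCd : δr ≤ Cd := by
    have h1 : (1 + K⁻¹^3 : ℝ≥0∞) ≤ μ (ball 0 (2 * ρ0)) := by
      have h := revdbl_step hdbl hCd1 0 ρ0 hρ0pos
      rwa [hρ0, mul_one] at h
    have h2 : μ (ball 0 (2 * ρ0)) ≤ K := by
      have h := hdbl 0 ρ0 hρ0pos
      rwa [hρ0, mul_one] at h
    have h3 := le_trans h1 h2
    rw [hδE, hKdef] at h3
    exact (ENNReal.ofReal_le_ofReal_iff hCdpos.le).mp h3
  set a : ℝ := Real.log δr with hadef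
  set b : ℝ := Real.log Cd with hbdef
  have ha : 0 < a := Real.log_pos hδr1
  have hb : 0 < b := Real.log_pos (lt_of_lt_of_le hδr1 hδrCd)
  set t : ℝ := a / (2*b) with htdef
  have ht0 : 0 < t := by positivity
  have hab : a ≤ b := Real.log_le_log (by linarith) hδrCd
  have ht1 : t ≤ 1/2 := by
    rw [htdef, div_le_iff₀ (by linarith)]; linarith
  set η : ℝ := b / a with hηdef
  have hη : 0 < η := by positivity
  set M : ℝ := 6 * max ρ0⁻¹ 1 with hMdef
  have hM1 : 1 ≤ M := by
    have h : (1:ℝ) ≤ max ρ0⁻¹ 1 := le_max_right _ _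
    rw [hMdef]; linarith
  have hMη : 0 < M^η := Real.rpow_pos_of_pos (by linarith) _
  have h2ρ0t : 0 ≤ 4*(2*ρ0)^t := by positivity
  set C : ℝ := M^η + 4*(2*ρ0)^t + 6*ρ0 + 1 with hCdef
  have hC1 : 1 ≤ C := by rw [hCdef]; nlinarith [hMη, h2ρ0t, hρ0pos]
  have hC0 : 0 < C := by linarith
  refine ⟨η, C, 1 - t, hη, hC0, by linarith, by linarith, ?_⟩
  intro z hz
  set s := ‖z‖ with hsdef
  have hs1 : 1 < s := hz
  have hs0 : 0 < s := by linarith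
  obtain ⟨hρzpos, hρz⟩ := hρ z
  have hdist0z : dist (0:ℂ) z = s := by
    rw [Complex.dist_eq, hsdef]; simp
  -- crude bound
  have hcrude : ρ z ≤ 2*(s + ρ0) := by
    by_contra h
    push_neg at h
    have hsub0 : ball (0:ℂ) ρ0 ⊆ ball z (s + ρ0) := by
      intro x hx
      rw [mem_ball] at hx ⊢
      calc dist x z ≤ dist x 0 + dist 0 z := dist_triangle _ _ _
        _ < ρ0 + s := by rw [hdist0z]; linarith
        _ = s + ρ0 := by ring
    have h1 : (1:ℝ≥0∞) ≤ μ (ball z (s+ρ0)) := by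
      rw [← hρ0]; exact measure_mono hsub0
    have h2 := revdbl_step hdbl hCd1 z (s+ρ0) (by linarith)
    have h3 : μ (ball z (2*(s+ρ0))) ≤ 1 := by
      rw [← hρz]; exact measure_mono (ball_subset_ball h.le)
    have hε : (K⁻¹^3 : ℝ≥0∞) ≠ 0 :=
      pow_ne_zero 3 (ENNReal.inv_ne_zero.mpr ENNReal.ofReal_ne_top)
    have hcontra : (1:ℝ≥0∞) + K⁻¹^3 ≤ 1 := by
      calc (1:ℝ≥0∞) + K⁻¹^3 = 1 + K⁻¹^3 * 1 := by rw [mul_one]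
        _ ≤ μ (ball z (s+ρ0)) + K⁻¹^3 * μ (ball z (s+ρ0)) :=
            add_le_add h1 (mul_le_mul_right h1 _)
        _ ≤ μ (ball z (2*(s+ρ0))) := h2
        _ ≤ 1 := h3
    exact absurd hcontra (ENNReal.lt_add_right ENNReal.one_ne_top hε).not_ge
  constructor
  · -- lower bound
    by_cases hcase : 2*s ≤ ρ z
    · have h1 : s ^ (-η) ≤ 1 :=
        Real.rpow_le_one_of_one_le_of_nonpos hs1.le (by linarith)
      have h2 : C⁻¹ ≤ 1 := by
        nlinarith [mul_inv_cancel₀ hC0.ne', inv_nonneg.mpr hC0.le]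
      calc C⁻¹ * s^(-η) ≤ 1 * 1 :=
            mul_le_mul h2 h1 (Real.rpow_nonneg hs0.le _) zero_le_one
        _ ≤ ρ z := by linarith
    · push_neg at hcase
      obtain ⟨p, hp1, hp2⟩ := exists_pow2_between (2*s/ρ z)
        (by rw [le_div_iff₀ hρzpos]; linarith)
      have hp1' : (2:ℝ)^p * ρ z ≤ 2*s := by
        rw [le_div_iff₀ hρzpos] at hp1; linarith
      have hp2' : s < (2:ℝ)^p * ρ z := by
        rw [div_lt_iff₀ hρzpos, pow_succ] at hp2; nlinarith
      obtain ⟨q, hq1, hq2⟩ := exists_pow2_ge (3*s/ρ0) (by positivity)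
      have hq1' : 3*s ≤ (2:ℝ)^q * ρ0 := by
        rw [div_le_iff₀ hρ0pos] at hq1; linarith
      have chain : (ENNReal.ofReal δr)^p ≤ K^q := by
        rw [← hδE]
        calc (1 + K⁻¹^3 : ℝ≥0∞)^p = (1 + K⁻¹^3)^p * μ (ball z (ρ z)) := by
              rw [hρz, mul_one]
          _ ≤ μ (ball z ((2:ℝ)^p * ρ z)) := revdbl_iter hdbl hCd1 z (ρ z) hρzpos p
          _ ≤ μ (ball z (2*s)) := measure_mono (ball_subset_ball hp1')
          _ ≤ μ (ball 0 (3*s)) := by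
              refine measure_mono fun x hx => ?_
              rw [mem_ball] at hx ⊢
              calc dist x 0 ≤ dist x z + dist z 0 := dist_triangle _ _ _
                _ < 2*s + s := by rw [dist_comm z 0, hdist0z]; linarith
                _ = 3*s := by ring
          _ ≤ μ (ball 0 ((2:ℝ)^q * ρ0)) := measure_mono (ball_subset_ball hq1')
          _ ≤ K^q * μ (ball 0 ρ0) := dbl_iter hdbl 0 ρ0 hρ0pos q
          _ = K^q := by rw [hρ0, mul_one]
      have chainR : δr^p ≤ Cd^q := by
        rw [hKdef, ← ENNReal.ofReal_pow (by linarith : (0:ℝ) ≤ δr),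
          ← ENNReal.ofReal_pow hCdpos.le] at chain
        exact (ENNReal.ofReal_le_ofReal_iff (by positivity)).mp chain
      have hlog : (p:ℝ) * a ≤ q * b := by
        have h := Real.log_le_log (by positivity) chainR
        rwa [Real.log_pow, Real.log_pow] at h
      have hpq : (p:ℝ) ≤ (q:ℝ) * η := by
        rw [hηdef, ← mul_div_assoc, le_div_iff₀ ha]
        linarith
      have h2qMs : (2:ℝ)^q ≤ M*s := by
        have e1 : 3*s/ρ0 ≤ 3*s*max ρ0⁻¹ 1 := by
          rw [div_eq_mul_inv]
          exact mul_le_mul_of_nonneg_left (le_max_left _ _) (by positivity)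
        have e2 : (1:ℝ) ≤ 3*s*max ρ0⁻¹ 1 := by
          nlinarith [le_max_right ρ0⁻¹ (1:ℝ)]
        have e3 : max (3*s/ρ0) 1 ≤ 3*s*max ρ0⁻¹ 1 := max_le e1 e2
        calc (2:ℝ)^q ≤ 2 * max (3*s/ρ0) 1 := hq2
          _ ≤ 2 * (3*s*max ρ0⁻¹ 1) := by linarith
          _ = M*s := by rw [hMdef]; ring
      have h2p : (2:ℝ)^p ≤ (M*s)^η := by
        calc (2:ℝ)^p = (2:ℝ)^(p:ℝ) := (Real.rpow_natCast 2 p).symm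
          _ ≤ (2:ℝ)^((q:ℝ)*η) := Real.rpow_le_rpow_of_exponent_le one_le_two hpq
          _ = ((2:ℝ)^(q:ℝ))^η := Real.rpow_mul (by norm_num) _ _
          _ = ((2:ℝ)^q)^η := by rw [Real.rpow_natCast]
          _ ≤ (M*s)^η := Real.rpow_le_rpow (by positivity) h2qMs hη.le
      have hfin : s/(M*s)^η ≤ ρ z := by
        have step1 : s/(M*s)^η ≤ s/(2:ℝ)^p :=
          div_le_div_of_nonneg_left hs0.le (pow_pos two_pos p) h2p
        have step2 : s/(2:ℝ)^p ≤ ρ z := by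
          rw [div_le_iff₀ (pow_pos two_pos p)]; nlinarith
        linarith
      have expand : s/(M*s)^η = (M^η)⁻¹ * s^(1-η) := by
        rw [Real.mul_rpow (by linarith : (0:ℝ) ≤ M) hs0.le, Real.rpow_sub hs0,
          Real.rpow_one]
        have hsη : s^η ≠ 0 := (Real.rpow_pos_of_pos hs0 η).ne'
        field_simp
      have hfinal : C⁻¹ * s^(-η) ≤ (M^η)⁻¹ * s^(1-η) := by
        have h1 : s^(-η) ≤ s^(1-η) :=
          Real.rpow_le_rpow_of_exponent_le hs1.le (by linarith)
        have h2 : C⁻¹ ≤ (M^η)⁻¹ := by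
          apply inv_anti₀ hMη
          rw [hCdef]; linarith
        exact mul_le_mul h2 h1 (Real.rpow_nonneg hs0.le _) (inv_nonneg.mpr hMη.le)
      calc C⁻¹ * s^(-η) ≤ (M^η)⁻¹ * s^(1-η) := hfinal
        _ = s/(M*s)^η := expand.symm
        _ ≤ ρ z := hfin
  · -- upper bound
    by_cases hcase : s < 2*ρ0
    · have h1 : ρ z ≤ 6*ρ0 := by linarith
      have h2 : (1:ℝ) ≤ s^(1-t) := by
        have h := Real.rpow_le_rpow_of_exponent_le hs1.le
          (show (0:ℝ) ≤ 1-t by linarith)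
        rwa [Real.rpow_zero] at h
      calc ρ z ≤ 6*ρ0 := h1
        _ ≤ C := by rw [hCdef]; linarith
        _ = C*1 := (mul_one C).symm
        _ ≤ C*s^(1-t) := mul_le_mul_of_nonneg_left h2 hC0.le
    · push_neg at hcase
      obtain ⟨n, hn1, hn2⟩ := exists_pow2_between (s/ρ0)
        (by rw [le_div_iff₀ hρ0pos]; nlinarith)
      have hn1' : (2:ℝ)^n * ρ0 ≤ s := by
        rw [le_div_iff₀ hρ0pos] at hn1; linarith
      have hn2' : s < 2*((2:ℝ)^n * ρ0) := by
        rw [div_lt_iff₀ hρ0pos, pow_succ] at hn2; nlinarith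
      have hρz3s : ρ z ≤ 3*s := by linarith
      obtain ⟨m, hm1, hm2⟩ := exists_pow2_between (4*s/ρ z)
        (by rw [le_div_iff₀ hρzpos]; nlinarith)
      have hm1' : (2:ℝ)^m * ρ z ≤ 4*s := by
        rw [le_div_iff₀ hρzpos] at hm1; linarith
      have hm2' : 2*s ≤ (2:ℝ)^m * ρ z := by
        rw [div_lt_iff₀ hρzpos, pow_succ] at hm2; nlinarith
      have chain : (ENNReal.ofReal δr)^n ≤ K^m := by
        rw [← hδE]
        calc (1 + K⁻¹^3 : ℝ≥0∞)^n = (1 + K⁻¹^3)^n * μ (ball 0 ρ0) := by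
              rw [hρ0, mul_one]
          _ ≤ μ (ball 0 ((2:ℝ)^n * ρ0)) := revdbl_iter hdbl hCd1 0 ρ0 hρ0pos n
          _ ≤ μ (ball 0 s) := measure_mono (ball_subset_ball hn1')
          _ ≤ μ (ball z (2*s)) := by
              refine measure_mono fun x hx => ?_
              rw [mem_ball] at hx ⊢
              calc dist x z ≤ dist x 0 + dist 0 z := dist_triangle _ _ _
                _ < s + s := by rw [hdist0z]; linarith
                _ = 2*s := by ring
          _ ≤ μ (ball z ((2:ℝ)^m * ρ z)) := measure_mono (ball_subset_ball hm2')
          _ ≤ K^m * μ (ball z (ρ z)) := dbl_iter hdbl z (ρ z) hρzpos m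
          _ = K^m := by rw [hρz, mul_one]
      have chainR : δr^n ≤ Cd^m := by
        rw [hKdef, ← ENNReal.ofReal_pow (by linarith : (0:ℝ) ≤ δr),
          ← ENNReal.ofReal_pow hCdpos.le] at chain
        exact (ENNReal.ofReal_le_ofReal_iff (by positivity)).mp chain
      have hlog : (n:ℝ) * a ≤ m * b := by
        have h := Real.log_le_log (by positivity) chainR
        rwa [Real.log_pow, Real.log_pow] at h
      have hnm : (n:ℝ)*t ≤ (m:ℝ) := by
        rw [htdef, ← mul_div_assoc, div_le_iff₀ (by linarith : (0:ℝ) < 2*b)]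
        nlinarith [mul_nonneg (Nat.cast_nonneg m) hb.le]
      have h2m : (s/(2*ρ0))^t ≤ (2:ℝ)^m := by
        have hbase : s/(2*ρ0) ≤ (2:ℝ)^n := by
          rw [div_le_iff₀ (by positivity : (0:ℝ) < 2*ρ0)]; nlinarith
        calc (s/(2*ρ0))^t ≤ ((2:ℝ)^n)^t :=
              Real.rpow_le_rpow (by positivity) hbase ht0.le
          _ = ((2:ℝ)^(n:ℝ))^t := by rw [Real.rpow_natCast]
          _ = (2:ℝ)^((n:ℝ)*t) := (Real.rpow_mul (by norm_num) _ _).symm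
          _ ≤ (2:ℝ)^(m:ℝ) := Real.rpow_le_rpow_of_exponent_le one_le_two hnm
          _ = (2:ℝ)^m := Real.rpow_natCast 2 m
      have hq0 : 0 < (s/(2*ρ0))^t := Real.rpow_pos_of_pos (by positivity) _
      have f1 : ρ z ≤ 4*s/(2:ℝ)^m := by
        rw [le_div_iff₀ (pow_pos two_pos m)]; nlinarith
      have f2 : 4*s/(2:ℝ)^m ≤ 4*s/((s/(2*ρ0))^t) :=
        div_le_div_of_nonneg_left (by positivity) hq0 h2m
      have f3 : 4*s/((s/(2*ρ0))^t) = 4*(2*ρ0)^t * s^(1-t) := by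
        rw [Real.div_rpow hs0.le (by positivity), Real.rpow_sub hs0, Real.rpow_one]
        have hst : s^t ≠ 0 := (Real.rpow_pos_of_pos hs0 t).ne'
        have h2ρ : (2*ρ0)^t ≠ 0 := (Real.rpow_pos_of_pos (by positivity) t).ne'
        field_simp
      have f4 : 4*(2*ρ0)^t ≤ C := by rw [hCdef]; linarith
      calc ρ z ≤ 4*s/(2:ℝ)^m := f1
        _ ≤ 4*(2*ρ0)^t * s^(1-t) := f3 ▸ f2
        _ ≤ C * s^(1-t) := mul_le_mul_of_nonneg_right f4 (Real.rpow_nonneg hs0.le _)
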